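/- With the notation of the paper, for any z = (u,v) ∈ ℋ and t₂ > t₁, the adjoint of the controllability operator L^μ_{t₁,t₂} satisfies |（L^μ_{t₁,t₂})* z|²_{L²((t₁,t₂);H)} = (1/2)( |C_μ^{1/2} z|²_ℋ - |C_μ^{1/2} S_μ*(t₂-t₁) z|²_ℋ ), where C_μ(u,v) = ((-A)^{-1}Q²u, (1/μ)(-A)^{-1}Q²v). -/

import Mathlib

/-- the adjoint of the controllability operator satisfies
`|(L^μ_{t₁,t₂})* z|²_{L²} = (1/2)(|C_μ^{1/2} z|²_ℋ - |C_μ^{1/2} S_μ*(t₂-t₁) z|²_ℋ)`,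
expressed in the eigenbasis of the Dirichlet Laplacian: the Fourier coefficients
`(f_k, g_k)` of `S_μ*(t) z` solve `μ f_k' = -g_k`, `μ g_k' = μ α_k f_k - g_k`,
`|(L*)z|² = Σ_k (λ_k²/(μ²α_k²)) ∫₀^{T} g_k²` with `T = t₂ - t₁`, and
`|C_μ^{1/2}(u,v)|² = Σ_k (λ_k²/α_k) u_k² + (λ_k²/(μ α_k²)) v_k²`. -/
theorem stmt9
    (μ T : ℝ) (hμ : 0 < μ) (hT : 0 < T)
    (a l : ℕ → ℝ) (ha : ∀ k, 0 < a k) (hl : ∀ k, 0 < l k)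
    (u v : ℕ → ℝ) (f g : ℕ → ℝ → ℝ)
    (hf : ∀ k t, HasDerivAt (f k) (-(g k t) / μ) t)
    (hg : ∀ k t, HasDerivAt (g k) ((μ * a k * f k t - g k t) / μ) t)
    (hf0 : ∀ k, f k 0 = u k) (hg0 : ∀ k, g k 0 = v k)
    (hsum1 : Summable fun k => (l k) ^ 2 / (a k) * (u k) ^ 2)
    (hsum2 : Summable fun k => (l k) ^ 2 / (μ * (a k) ^ 2) * (v k) ^ 2)
    (hsumI : Summable fun k => (l k) ^ 2 / (μ ^ 2 * (a k) ^ 2) * ∫ t in (0:ℝ)..T, (g k t) ^ 2) :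
    ∑' k, (l k) ^ 2 / (μ ^ 2 * (a k) ^ 2) * ∫ t in (0:ℝ)..T, (g k t) ^ 2
      = (1 / 2) *
        ((∑' k, ((l k) ^ 2 / (a k) * (u k) ^ 2 + (l k) ^ 2 / (μ * (a k) ^ 2) * (v k) ^ 2))
          - ∑' k, ((l k) ^ 2 / (a k) * (f k T) ^ 2 + (l k) ^ 2 / (μ * (a k) ^ 2) * (g k T) ^ 2)) := by
  have hμ' : μ ≠ 0 := ne_of_gt hμ
  -- key per-mode identity
  have key : ∀ k, (l k) ^ 2 / (μ ^ 2 * (a k) ^ 2) * ∫ t in (0:ℝ)..T, (g k t) ^ 2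
      = (1 / 2) * (((l k) ^ 2 / (a k) * (u k) ^ 2 + (l k) ^ 2 / (μ * (a k) ^ 2) * (v k) ^ 2)
          - ((l k) ^ 2 / (a k) * (f k T) ^ 2 + (l k) ^ 2 / (μ * (a k) ^ 2) * (g k T) ^ 2)) := by
    intro k
    have ha' : a k ≠ 0 := ne_of_gt (ha k)
    -- energy identity: ∫₀ᵀ g² = (μ/2)((μ a u² + v²) - (μ a f(T)² + g(T)²))
    have hint : ∫ t in (0:ℝ)..T, (g k t) ^ 2
        = (μ / 2) * ((μ * a k * (u k) ^ 2 + (v k) ^ 2)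
            - (μ * a k * (f k T) ^ 2 + (g k T) ^ 2)) := by
      have hF : ∀ t ∈ Set.uIcc (0:ℝ) T,
          HasDerivAt (fun s => -(μ / 2) * (μ * a k * (f k s) ^ 2 + (g k s) ^ 2))
            ((g k t) ^ 2) t := by
        intro t _
        have h1 := ((hf k t).pow 2)
        have h2 := ((hg k t).pow 2)
        have := ((h1.const_mul (μ * a k)).add h2).const_mul (-(μ / 2))
        refine this.congr_deriv ?_
        field_simp
        ring
      have hc : IntervalIntegrable (fun t => (g k t) ^ 2) MeasureTheory.volume 0 T := by
        apply Continuous.intervalIntegrable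
        have : Continuous (g k) :=
          continuous_iff_continuousAt.mpr fun t => (hg k t).continuousAt
        exact this.pow 2
      have := intervalIntegral.integral_eq_sub_of_hasDerivAt hF hc
      rw [this, hf0, hg0]
      ring
    rw [hint]
    field_simp
  -- summability of the terminal-energy series
  have hsum0 : Summable fun k => ((l k) ^ 2 / (a k) * (u k) ^ 2 + (l k) ^ 2 / (μ * (a k) ^ 2) * (v k) ^ 2) :=
    hsum1.add hsum2
  have hsumT : Summable fun k => ((l k) ^ 2 / (a k) * (f k T) ^ 2 + (l k) ^ 2 / (μ * (a k) ^ 2) * (g k T) ^ 2) := by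
    have : (fun k => ((l k) ^ 2 / (a k) * (f k T) ^ 2 + (l k) ^ 2 / (μ * (a k) ^ 2) * (g k T) ^ 2))
        = fun k => ((l k) ^ 2 / (a k) * (u k) ^ 2 + (l k) ^ 2 / (μ * (a k) ^ 2) * (v k) ^ 2)
            - 2 * ((l k) ^ 2 / (μ ^ 2 * (a k) ^ 2) * ∫ t in (0:ℝ)..T, (g k t) ^ 2) := by
      funext k
      have := key k
      linarith
    rw [this]
    exact hsum0.sub (hsumI.mul_left 2)
  calc ∑' k, (l k) ^ 2 / (μ ^ 2 * (a k) ^ 2) * ∫ t in (0:ℝ)..T, (g k t) ^ 2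
      = ∑' k, (1 / 2) * (((l k) ^ 2 / (a k) * (u k) ^ 2 + (l k) ^ 2 / (μ * (a k) ^ 2) * (v k) ^ 2)
          - ((l k) ^ 2 / (a k) * (f k T) ^ 2 + (l k) ^ 2 / (μ * (a k) ^ 2) * (g k T) ^ 2)) := by
        exact tsum_congr key
    _ = (1 / 2) * ∑' k, (((l k) ^ 2 / (a k) * (u k) ^ 2 + (l k) ^ 2 / (μ * (a k) ^ 2) * (v k) ^ 2)
          - ((l k) ^ 2 / (a k) * (f k T) ^ 2 + (l k) ^ 2 / (μ * (a k) ^ 2) * (g k T) ^ 2)) :=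
        tsum_mul_left
    _ = _ := by rw [Summable.tsum_sub hsum0 hsumT]
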